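/- Let T ⊆ T' be rooted normal trees in G with the same root, and let s, s' be vertices of T' lying in distinct components of D ∩ T' for some component D of G − T. Then s and s' are incomparable in the tree-order of T'. -/

import Mathlib

open Set

namespace NST

variable {V : Type*}

/-- A ray (one-way infinite path) in `G`, given by its vertex sequence. -/
def IsRay (G : SimpleGraph V) (f : ℕ → V) : Prop :=
  Function.Injective f ∧ ∀ n, G.Adj (f n) (f (n + 1))

/-- `S` separates `A` from `B` in `G`: every walk from `A` to `B` meets `S`. -/
def Separates (G : SimpleGraph V) (S A B : Set V) : Prop :=
  ∀ a ∈ A, ∀ b ∈ B, ∀ p : G.Walk a b, ∃ s ∈ S, s ∈ p.support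

/-- `U` is dispersed in `G`: every ray can be separated from `U` by a finite
vertex set (separating `U` from a tail of the ray). -/
def Dispersed (G : SimpleGraph V) (U : Set V) : Prop :=
  ∀ f : ℕ → V, IsRay G f →
    ∃ S : Set V, S.Finite ∧ ∃ N : ℕ, Separates G S U (f '' {n | N ≤ n})

/-- A subdivision of the countably infinite complete graph `K^{ℵ₀}` inside `G`:
countably many branch vertices, pairwise joined by internally disjoint paths. -/
structure KSubdivision (G : SimpleGraph V) where
  branch : ℕ → V
  inj : Function.Injective branch
  path : ∀ i j : ℕ, i < j → G.Walk (branch i) (branch j)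
  isPath : ∀ i j (h : i < j), (path i j h).IsPath
  internallyDisjoint : ∀ i j (h : i < j), ∀ i' j' (h' : i' < j'), (i, j) ≠ (i', j') →
    ∀ v, v ∈ (path i j h).support → v ∈ (path i' j' h').support →
      (v = branch i ∨ v = branch j) ∧ (v = branch i' ∨ v = branch j')

/-- The vertex set of a subdivided `K^{ℵ₀}`. -/
def KSubdivision.verts {G : SimpleGraph V} (K : KSubdivision G) : Set V :=
  ⋃ (i : ℕ) (j : ℕ) (h : i < j), {v | v ∈ (K.path i j h).support}

/-- `U` is `TK^{ℵ₀}`-dispersed in `G`: every subdivided infinite clique in `G`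
can be separated from `U` by a finite vertex set. -/
def TKDispersed (G : SimpleGraph V) (U : Set V) : Prop :=
  ∀ K : KSubdivision G, ∃ S : Set V, S.Finite ∧ Separates G S U K.verts

/-- Tree-order of a (spanning) tree `T` on `V` with root `r`:
`u ≤ v` iff `u` lies on every (equivalently, the unique) `r`–`v` path in `T`. -/
def TreeLE (T : SimpleGraph V) (r u v : V) : Prop :=
  ∀ p : T.Walk r v, p.IsPath → u ∈ p.support

/-- `T` is a normal spanning tree of `G` with root `r`. -/
def IsNormalSpanningTree (G T : SimpleGraph V) (r : V) : Prop :=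
  T ≤ G ∧ T.IsTree ∧ ∀ u v : V, G.Adj u v → TreeLE T r u v ∨ TreeLE T r v u

/-- `G` has a normal spanning tree. -/
def HasNST (G : SimpleGraph V) : Prop :=
  ∃ (T : SimpleGraph V) (r : V), IsNormalSpanningTree G T r

/-- Tree-order for a rooted tree given as a subgraph `T ⊆ G`. -/
def SubTreeLE (G : SimpleGraph V) (T : G.Subgraph) (r u v : V) : Prop :=
  ∃ (hr : r ∈ T.verts) (hu : u ∈ T.verts) (hv : v ∈ T.verts),
    ∀ p : T.coe.Walk ⟨r, hr⟩ ⟨v, hv⟩, p.IsPath → ⟨u, hu⟩ ∈ p.support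

/-- `p` is a `T`-path in `G`: a nontrivial path with both ends in `T` but all
edges and inner vertices outside `T`. -/
def IsTPath (G : SimpleGraph V) (T : G.Subgraph) {u v : V} (p : G.Walk u v) : Prop :=
  p.IsPath ∧ 0 < p.length ∧ u ∈ T.verts ∧ v ∈ T.verts ∧
    (∀ w ∈ p.support, w ≠ u → w ≠ v → w ∉ T.verts) ∧
    ∀ e ∈ p.edges, e ∉ T.edgeSet

/-- `T` is a normal rooted tree in `G` with root `r`: it is a tree containing `r`,
and the endvertices of every `T`-path in `G` are comparable in its tree-order. -/
def IsNormalTree (G : SimpleGraph V) (T : G.Subgraph) (r : V) : Prop :=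
  T.coe.IsTree ∧ r ∈ T.verts ∧
    ∀ (u v : V) (p : G.Walk u v), IsTPath G T p →
      SubTreeLE G T r u v ∨ SubTreeLE G T r v u

/-- `D` is (the vertex set of) a connected component of the subgraph of `G`
induced on `A`: a maximal subset of `A` inducing a connected subgraph. -/
def IsComponentOf (G : SimpleGraph V) (A D : Set V) : Prop :=
  D ⊆ A ∧ D.Nonempty ∧ (G.induce D).Connected ∧
    ∀ D' : Set V, D ⊆ D' → D' ⊆ A → (G.induce D').Connected → D' = D

/-- The neighbourhood `N(D)` of a set `D` in (the vertex set of) `T`. -/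
def NbhdIn (G : SimpleGraph V) (T : G.Subgraph) (D : Set V) : Set V :=
  {x ∈ T.verts | ∃ d ∈ D, G.Adj x d}

/-- The subgraph `T` of `G` is rayless: it contains no one-way infinite path. -/
def Rayless {W : Type*} {G : SimpleGraph W} (T : G.Subgraph) : Prop :=
  ¬ ∃ f : ℕ → W, Function.Injective f ∧ ∀ n, T.Adj (f n) (f (n + 1))

/-- `x` dominates the ray `f` in `G`: no finite vertex set avoiding `x`
separates `x` from (a tail of) the ray. -/
def Dominates (G : SimpleGraph V) (f : ℕ → V) (x : V) : Prop :=
  ∀ S : Set V, S.Finite → x ∉ S →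
    ∃ (n : ℕ) (p : G.Walk x (f n)), ∀ s ∈ S, s ∉ p.support

end NST

open NST

section Aux

open SimpleGraph

variable {W : Type*} {H : SimpleGraph W}

/-- A component is closed under adjacency within the ambient set. -/
lemma comp_closed {A S : Set W} (hS : NST.IsComponentOf H A S)
    {x y : W} (hx : x ∈ S) (hxy : H.Adj x y) (hyA : y ∈ A) : y ∈ S := by
  by_cases hyS : y ∈ S
  · exact hyS
  have hsub : S ⊆ insert y S := Set.subset_insert _ _
  have hxS' : x ∈ insert y S := Set.mem_insert_of_mem _ hx
  have hreach : ∀ a : (insert y S : Set W),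
      (H.induce (insert y S)).Reachable a ⟨x, hxS'⟩ := by
    rintro ⟨a, ha⟩
    rcases Set.mem_insert_iff.1 ha with h | h
    · have hadj : (H.induce (insert y S)).Adj ⟨a, ha⟩ ⟨x, hxS'⟩ := by
        simp only [comap_adj, Function.Embedding.coe_subtype]
        rw [h]; exact hxy.symm
      exact hadj.reachable
    · have hr := hS.2.2.1.preconnected ⟨a, h⟩ ⟨x, hx⟩
      exact hr.map (induceHomOfLE H hsub).toHom
  haveI : Nonempty (insert y S : Set W) := ⟨⟨x, hxS'⟩⟩
  have hconn : (H.induce (insert y S)).Connected :=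
    ⟨fun a b => (hreach a).trans (hreach b).symm⟩
  have heq := hS.2.2.2 _ hsub (Set.insert_subset hyA hS.1) hconn
  rw [← heq]; exact Set.mem_insert _ _

/-- A component absorbs the endpoint of any walk staying in the ambient set. -/
lemma comp_closed_walk {A S : Set W} (hS : NST.IsComponentOf H A S)
    {x y : W} (hx : x ∈ S) (w : H.Walk x y) (hw : ∀ z ∈ w.support, z ∈ A) :
    y ∈ S := by
  induction w with
  | nil => exact hx
  | cons h p ih =>
    exact ih (comp_closed hS hx h (hw _ (by simp)))
      (fun z hz => hw z (by simp [hz]))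

/-- Components sharing a vertex are equal. -/
lemma comp_eq {A S S' : Set W} (hS : NST.IsComponentOf H A S)
    (hS' : NST.IsComponentOf H A S') {v : W} (hv : v ∈ S) (hv' : v ∈ S') :
    S = S' := by
  have main : ∀ (B C : Set W), NST.IsComponentOf H A B → NST.IsComponentOf H A C →
      v ∈ B → v ∈ C → B ⊆ C := by
    intro B C hB hC hvB hvC y hy
    obtain ⟨w⟩ := hB.2.2.1.preconnected ⟨v, hvB⟩ ⟨y, hy⟩
    let ι : H.induce B →g H := ⟨Subtype.val, fun h => h⟩
    refine comp_closed_walk hC hvC (w.map ι) ?_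
    intro z hz
    rw [SimpleGraph.Walk.support_map] at hz
    obtain ⟨a, _, rfl⟩ := List.mem_map.1 hz
    exact hB.1 a.2
  exact Set.Subset.antisymm (main S S' hS hS' hv hv') (main S' S hS' hS hv' hv)

/-- Along a walk starting where `P` holds that contains a vertex where `P`
fails, there is a boundary edge. -/
lemma exists_boundary {P : W → Prop} {a b : W} (w : H.Walk a b)
    (ha : P a) (hex : ∃ x ∈ w.support, ¬ P x) :
    ∃ u v, H.Adj u v ∧ P u ∧ ¬ P v ∧ v ∈ w.support := by
  induction w with
  | nil =>
    obtain ⟨x, hx, hPx⟩ := hex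
    simp only [SimpleGraph.Walk.support_nil, List.mem_singleton] at hx
    exact absurd (hx ▸ ha) hPx
  | @cons u c d h p ih =>
    by_cases hc : P c
    · obtain ⟨x, hx, hPx⟩ := hex
      have hx' : x ∈ p.support := by
        simp only [SimpleGraph.Walk.support_cons, List.mem_cons] at hx
        rcases hx with rfl | hx
        · exact absurd ha hPx
        · exact hx
      obtain ⟨u', v', h', hu', hv', hmem⟩ := ih hc ⟨x, hx', hPx⟩
      exact ⟨u', v', h', hu', hv', by simp [hmem]⟩
    · exact ⟨u, c, h, ha, hc, by simp⟩

variable {V : Type*} {G : SimpleGraph V}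

/-- In a tree `T'`, any path between two vertices of a connected subgraph
`T ≤ T'` stays inside `T`. -/
lemma subtree_support {T T' : G.Subgraph} (hTT' : T ≤ T')
    (hT'tree : T'.coe.IsTree) (hTconn : T.coe.Connected)
    {a b : T'.verts} (ha : (a : V) ∈ T.verts) (hb : (b : V) ∈ T.verts)
    (P : T'.coe.Walk a b) (hP : P.IsPath) :
    ∀ x ∈ P.support, (x : V) ∈ T.verts := by
  classical
  obtain ⟨w⟩ := hTconn.preconnected ⟨(a : V), ha⟩ ⟨(b : V), hb⟩
  obtain ⟨w', hw'⟩ := w.toPath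
  have hinj := SimpleGraph.Subgraph.inclusion.injective hTT'
  let w'' := (w'.map (SimpleGraph.Subgraph.inclusion hTT')).copy
    (Subtype.ext rfl) (Subtype.ext rfl)
  have hw'' : w''.IsPath := by
    rw [SimpleGraph.Walk.isPath_copy]
    exact SimpleGraph.Walk.map_isPath_of_injective hinj hw'
  have hPeq : P = w'' :=
    ((hT'tree.existsUnique_path a b).unique hP hw'')
  intro x hx
  rw [hPeq] at hx
  replace hx : x ∈ (w'.map (SimpleGraph.Subgraph.inclusion hTT')).support := hx
  rw [SimpleGraph.Walk.support_map] at hx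
  obtain ⟨z, _, rfl⟩ := List.mem_map.1 hx
  exact z.2

end Aux


/-- Key lemma: `s` is not below `s'` in the tree order of `T'`. -/
lemma key (G : SimpleGraph V) (T T' : G.Subgraph) (r : V)
    (hTT' : T ≤ T') (hTtree : T.coe.IsTree) (hrT : r ∈ T.verts)
    (hT' : IsNormalTree G T' r)
    (D : Set V) (hD : IsComponentOf G T.vertsᶜ D)
    (S S' : Set V) (hS : IsComponentOf T'.spanningCoe (D ∩ T'.verts) S)
    (hS' : IsComponentOf T'.spanningCoe (D ∩ T'.verts) S') (hne : S ≠ S')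
    (s s' : V) (hs : s ∈ S) (hs' : s' ∈ S') : ¬ SubTreeLE G T' r s s' := by
  classical
  rintro ⟨hr', hsV, hs'V, hall⟩
  have hsD : s ∈ D := (hS.1 hs).1
  have hs'D : s' ∈ D := (hS'.1 hs').1
  have htree := hT'.1
  obtain ⟨w0⟩ := htree.isConnected.preconnected ⟨r, hr'⟩ ⟨s', hs'V⟩
  obtain ⟨p, hp⟩ := w0.toPath
  have hsp : (⟨s, hsV⟩ : T'.verts) ∈ p.support := hall p hp
  have hqp : (p.dropUntil _ hsp).IsPath := hp.dropUntil hsp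
  by_cases hcase : ∀ x ∈ (p.dropUntil _ hsp).support, (x : V) ∈ D
  · -- the whole segment stays in `D`: then `S = S'`
    let ι : T'.coe →g T'.spanningCoe := ⟨Subtype.val, fun h => h⟩
    have hs'S : s' ∈ S := by
      refine comp_closed_walk hS hs ((p.dropUntil _ hsp).map ι) ?_
      intro z hz
      rw [SimpleGraph.Walk.support_map] at hz
      obtain ⟨x, hx, rfl⟩ := List.mem_map.1 hz
      exact ⟨hcase x hx, x.2⟩
    exact hne (comp_eq hS hS' hs'S hs')
  · push_neg at hcase
    obtain ⟨x, hx, hxD⟩ := hcase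
    obtain ⟨u, v, huv, huD, hvD, hvmem⟩ :=
      exists_boundary (P := fun z : T'.verts => (z : V) ∈ D)
        (p.dropUntil _ hsp) hsD ⟨x, hx, hxD⟩
    have hvT : (v : V) ∈ T.verts := by
      by_contra hvT
      exact hvD (comp_closed hD huD (T'.adj_sub huv) hvT)
    -- build the path from `r` to `v` through `s`
    have hbig : (((p.takeUntil _ hsp).append
        (((p.dropUntil _ hsp)).takeUntil v hvmem)).append
        ((p.dropUntil _ hsp).dropUntil v hvmem)).IsPath := by
      rw [← SimpleGraph.Walk.append_assoc, SimpleGraph.Walk.take_spec,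
        SimpleGraph.Walk.take_spec]
      exact hp
    have hPp := hbig.of_append_left
    have hsP : (⟨s, hsV⟩ : T'.verts) ∈ ((p.takeUntil _ hsp).append
        ((p.dropUntil _ hsp).takeUntil v hvmem)).support := by
      rw [SimpleGraph.Walk.mem_support_append_iff]
      exact Or.inl (SimpleGraph.Walk.end_mem_support _)
    have hsT : s ∈ T.verts :=
      subtree_support hTT' htree hTtree.isConnected hrT hvT _ hPp _ hsP
    exact (hD.1 hsD) hsT

/-- Vertices in distinct components of `D ∩ T'` are incomparable in the
tree-order of `T'`. -/
theorem stmt19 {V : Type*} (G : SimpleGraph V) (T T' : G.Subgraph) (r : V)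
    (hTT' : T ≤ T') (hTtree : T.coe.IsTree) (hrT : r ∈ T.verts)
    (hT' : IsNormalTree G T' r)
    (D : Set V) (hD : IsComponentOf G T.vertsᶜ D)
    (S S' : Set V) (hS : IsComponentOf T'.spanningCoe (D ∩ T'.verts) S)
    (hS' : IsComponentOf T'.spanningCoe (D ∩ T'.verts) S') (hne : S ≠ S')
    (s s' : V) (hs : s ∈ S) (hs' : s' ∈ S') :
    ¬ SubTreeLE G T' r s s' ∧ ¬ SubTreeLE G T' r s' s := by
  exact ⟨key G T T' r hTT' hTtree hrT hT' D hD S S' hS hS' hne s s' hs hs',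
    key G T T' r hTT' hTtree hrT hT' D hD S' S hS' hS (Ne.symm hne) s' s hs' hs⟩
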